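/- Let b, μ, k > 0, p > 0, let P < 0, let R₀ < 1, set Q = −((μ+k)·μ/(p·b²))·(R₀ − 1) and R_P = 1 − p·b²·P²/(4·(μ+k)·μ), and assume R₀ > R_P. Then the quadratic equation x² + P·x + Q = 0 has exactly two distinct roots, and both are strictly positive. (This is the two-endemic-equilibria case of the endemic-equilibrium theorem for α = 0.) -/

import Mathlib

/-- The two-endemic-equilibria case for `α = 0`: if `P < 0`, `R₀ < 1` and
`R₀ > R_P`, the endemic quadratic has exactly two distinct roots, both
strictly positive. -/
theorem two_endemic_equilibria
    (b μ k p : ℝ) (hb : 0 < b) (hμ : 0 < μ) (hk : 0 < k) (hp : 0 < p)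
    (P R0 Q RP : ℝ) (hPneg : P < 0) (hR0lt : R0 < 1)
    (hQ : Q = -((μ + k) * μ / (p * b ^ 2)) * (R0 - 1))
    (hRP : RP = 1 - p * b ^ 2 * P ^ 2 / (4 * (μ + k) * μ))
    (hgt : RP < R0) :
    ∃ x y : ℝ, x ≠ y ∧ 0 < x ∧ 0 < y ∧
      x ^ 2 + P * x + Q = 0 ∧ y ^ 2 + P * y + Q = 0 ∧
      ∀ z : ℝ, z ^ 2 + P * z + Q = 0 → z = x ∨ z = y := by
  have hpb : 0 < p * b ^ 2 := by positivity
  have hμk : 0 < (μ + k) * μ := by positivity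
  have hQpos : 0 < Q := by
    rw [hQ]
    have h1 : 0 < (μ + k) * μ / (p * b ^ 2) := by positivity
    nlinarith
  have hD : 0 < P ^ 2 - 4 * Q := by
    rw [hRP] at hgt
    rw [hQ]
    have h : p * b ^ 2 * P ^ 2 / (4 * (μ + k) * μ) > 1 - R0 := by linarith
    have h2 : p * b ^ 2 * P ^ 2 > (1 - R0) * (4 * (μ + k) * μ) := by
      have h4 : 0 < 4 * (μ + k) * μ := by positivity
      calc p * b ^ 2 * P ^ 2 = p * b ^ 2 * P ^ 2 / (4 * (μ + k) * μ) * (4 * (μ + k) * μ) := by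
            field_simp
        _ > (1 - R0) * (4 * (μ + k) * μ) := by
            exact mul_lt_mul_of_pos_right h h4
    have key : 4 * (-((μ + k) * μ / (p * b ^ 2)) * (R0 - 1)) < P ^ 2 := by
      have heq : 4 * (-((μ + k) * μ / (p * b ^ 2)) * (R0 - 1))
          = 4 * (μ + k) * μ * (1 - R0) / (p * b ^ 2) := by
        field_simp; ring
      rw [heq, div_lt_iff₀ hpb]
      nlinarith
    linarith
  set D := P ^ 2 - 4 * Q with hDdef
  have hs : Real.sqrt D ^ 2 = D := Real.sq_sqrt hD.le
  have hspos : 0 < Real.sqrt D := Real.sqrt_pos.mpr hD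
  have hsltP : Real.sqrt D < -P := by
    have : Real.sqrt D ^ 2 < (-P) ^ 2 := by rw [hs]; nlinarith
    exact lt_of_pow_lt_pow_left₀ 2 (by linarith) this
  refine ⟨(-P + Real.sqrt D) / 2, (-P - Real.sqrt D) / 2, ?_, by linarith, by linarith, ?_, ?_, ?_⟩
  · intro h; nlinarith [sub_eq_zero.mpr h]
  · nlinarith
  · nlinarith
  · intro z hz
    have : (z - (-P + Real.sqrt D) / 2) * (z - (-P - Real.sqrt D) / 2) = 0 := by nlinarith
    rcases mul_eq_zero.mp this with h | h
    · left; linarith [sub_eq_zero.mp h]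
    · right; linarith [sub_eq_zero.mp h]
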